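/- Fix d > 0 and let P = ⋃_{m∈ℤ} {a ∈ ℝ² : |a₁ sinh(md) − a₂ cosh(md)| ≤ 1}. Then the contraction map a ↦ a/√(−⟨a,a⟩), restricted to ∂P ∩ L (the frontier of P intersected with the cone L = {a : ⟨a,a⟩ < 0}), is a homeomorphism onto the hyperbola G = {a ∈ ℝ² : ⟨a,a⟩ = −1}, and it is equivariant with respect to the linear action of Γ_d, i.e. it commutes with every map a ↦ ε·B(md)·a. -/

import Mathlib

open Real

/-- The action of the element `z(md, ε) ∈ Γ_d`: the map `a ↦ ε·B(md)·a` with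
`B(s)` the boost matrix `[[cosh s, sinh s],[sinh s, cosh s]]`. -/
noncomputable def boost (d : ℝ) (m : ℤ) (ε : ℝ) : ℝ × ℝ → ℝ × ℝ :=
  fun a => ε • (a.1 * Real.cosh ((m : ℝ) * d) + a.2 * Real.sinh ((m : ℝ) * d),
                a.1 * Real.sinh ((m : ℝ) * d) + a.2 * Real.cosh ((m : ℝ) * d))

/-- `P = ⋃_{m∈ℤ} {a : |a₁ sinh(md) − a₂ cosh(md)| ≤ 1}`. -/
noncomputable def Pol (d : ℝ) : Set (ℝ × ℝ) :=
  ⋃ m : ℤ, {a : ℝ × ℝ | |a.1 * Real.sinh ((m : ℝ) * d) - a.2 * Real.cosh ((m : ℝ) * d)| ≤ 1}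

/-- The cone `L = {a ∈ ℝ² : ⟨a,a⟩ < 0}` for the Minkowski form `⟨a,b⟩ = a₁b₁ − a₂b₂`. -/
def Lcone : Set (ℝ × ℝ) := {a | a.1 * a.1 - a.2 * a.2 < 0}

/-- The hyperbola `G = {a ∈ ℝ² : ⟨a,a⟩ = −1}`. -/
def Ghyp : Set (ℝ × ℝ) := {a | a.1 * a.1 - a.2 * a.2 = -1}

/-- The contraction `a ↦ a/√(−⟨a,a⟩)`. -/
noncomputable def contr (a : ℝ × ℝ) : ℝ × ℝ :=
  (Real.sqrt (-(a.1 * a.1 - a.2 * a.2)))⁻¹ • a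

/- ### Auxiliary development -/

/-- The lattice `dℤ ⊆ ℝ`. -/
def SLat (d : ℝ) : Set ℝ := Set.range (fun m : ℤ => (m : ℝ) * d)

/-- The boost parameter of a timelike vector. -/
noncomputable def tau (a : ℝ × ℝ) : ℝ :=
  Real.arsinh (a.1 * a.2 / (|a.2| * Real.sqrt (a.2 ^ 2 - a.1 ^ 2)))

/-- The scaled "distance to the frontier" function. -/
noncomputable def cc (d : ℝ) (a : ℝ × ℝ) : ℝ :=
  Real.sqrt (a.2 ^ 2 - a.1 ^ 2) * Real.cosh (Metric.infDist (tau a) (SLat d))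

lemma Lcone_sq {a : ℝ × ℝ} (ha : a ∈ Lcone) : a.1 ^ 2 < a.2 ^ 2 := by
  have h : a.1 * a.1 - a.2 * a.2 < 0 := ha
  nlinarith

lemma Lcone_a2_ne {a : ℝ × ℝ} (ha : a ∈ Lcone) : a.2 ≠ 0 := by
  intro h
  have := Lcone_sq ha
  rw [h] at this
  nlinarith [sq_nonneg a.1]

lemma Lcone_r_pos {a : ℝ × ℝ} (ha : a ∈ Lcone) : 0 < Real.sqrt (a.2 ^ 2 - a.1 ^ 2) :=
  Real.sqrt_pos.2 (by have := Lcone_sq ha; linarith)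

lemma Lcone_r_sq {a : ℝ × ℝ} (ha : a ∈ Lcone) :
    Real.sqrt (a.2 ^ 2 - a.1 ^ 2) ^ 2 = a.2 ^ 2 - a.1 ^ 2 :=
  Real.sq_sqrt (by have := Lcone_sq ha; linarith)

lemma isOpen_Lcone : IsOpen Lcone := by
  have : Lcone = (fun a : ℝ × ℝ => a.1 * a.1 - a.2 * a.2) ⁻¹' (Set.Iio 0) := rfl
  rw [this]
  exact isOpen_Iio.preimage (by fun_prop)

lemma abs_sinh_le_cosh (s : ℝ) : |Real.sinh s| ≤ Real.cosh s := by
  nlinarith [Real.cosh_sq_sub_sinh_sq s, Real.cosh_pos s, sq_abs (Real.sinh s), abs_nonneg (Real.sinh s)]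

/-- Key computation: the Minkowski pairing with `z(s)` in polar-like coordinates. -/
lemma keyA {a : ℝ × ℝ} (ha : a ∈ Lcone) (s : ℝ) :
    |a.1 * Real.sinh s - a.2 * Real.cosh s|
      = Real.sqrt (a.2 ^ 2 - a.1 ^ 2) * Real.cosh (tau a - s) := by
  have hsq := Lcone_sq ha
  have ha2 := Lcone_a2_ne ha
  set r := Real.sqrt (a.2 ^ 2 - a.1 ^ 2) with hrdef
  have hrpos : 0 < r := Lcone_r_pos ha
  have hr2 : r ^ 2 = a.2 ^ 2 - a.1 ^ 2 := Lcone_r_sq ha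
  have habs2 : 0 < |a.2| := abs_pos.2 ha2
  set u := a.1 * a.2 / (|a.2| * r) with hu
  have hsinh : Real.sinh (tau a) = u := Real.sinh_arsinh _
  have hcosh : Real.cosh (tau a) = |a.2| / r := by
    rw [tau, Real.cosh_arsinh]
    have h1 : 1 + (a.1 * a.2 / (|a.2| * r)) ^ 2 = a.2 ^ 2 / r ^ 2 := by
      field_simp
      rw [sq_abs]
      linear_combination (a.2 ^ 2) * hr2
    rw [← hrdef, h1]
    rw [Real.sqrt_div (sq_nonneg a.2), Real.sqrt_sq_eq_abs, Real.sqrt_sq hrpos.le]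
  have h12 : |a.1| < |a.2| := by
    rw [← Real.sqrt_sq_eq_abs, ← Real.sqrt_sq_eq_abs a.2]
    exact Real.sqrt_lt_sqrt (sq_nonneg _) hsq
  have hkey : |a.1| * |Real.sinh s| < |a.2| * Real.cosh s := by
    calc |a.1| * |Real.sinh s| ≤ |a.1| * Real.cosh s :=
          mul_le_mul_of_nonneg_left (abs_sinh_le_cosh s) (abs_nonneg _)
      _ < |a.2| * Real.cosh s := by
          exact mul_lt_mul_of_pos_right h12 (Real.cosh_pos s)
  have hprod : a.1 * Real.sinh s ≤ |a.1| * |Real.sinh s| := by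
    calc a.1 * Real.sinh s ≤ |a.1 * Real.sinh s| := le_abs_self _
      _ = |a.1| * |Real.sinh s| := abs_mul _ _
  have hprod' : -(a.1 * Real.sinh s) ≤ |a.1| * |Real.sinh s| := by
    calc -(a.1 * Real.sinh s) ≤ |a.1 * Real.sinh s| := neg_le_abs _
      _ = |a.1| * |Real.sinh s| := abs_mul _ _
  rw [Real.cosh_sub, hsinh, hcosh]
  have hRHS : r * (|a.2| / r * Real.cosh s - u * Real.sinh s)
      = |a.2| * Real.cosh s - a.1 * a.2 / |a.2| * Real.sinh s := by
    rw [hu]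
    field_simp
  rw [hRHS]
  rcases lt_or_gt_of_ne ha2 with h2 | h2
  · have habs : |a.2| = -a.2 := abs_of_neg h2
    have hdiv : a.1 * a.2 / |a.2| = -a.1 := by
      rw [habs, div_neg, mul_div_assoc, div_self ha2, mul_one]
    rw [hdiv, habs, abs_of_nonneg]
    · ring
    · rw [habs] at hkey; nlinarith
  · have habs : |a.2| = a.2 := abs_of_pos h2
    have hdiv : a.1 * a.2 / |a.2| = a.1 := by
      rw [habs, mul_div_assoc, div_self ha2, mul_one]
    rw [hdiv, habs, abs_of_nonpos]
    · ring
    · rw [habs] at hkey; nlinarith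

lemma round_min (x : ℝ) (n : ℤ) : |x - round x| ≤ |x - (n : ℝ)| := by
  rcases eq_or_ne n (round x) with rfl | hne
  · exact le_refl _
  · have h1 : (1 : ℝ) ≤ |(round x : ℝ) - (n : ℝ)| := by
      have h0 : (1 : ℤ) ≤ |round x - n| := Int.one_le_abs (sub_ne_zero.2 (Ne.symm hne))
      exact_mod_cast h0
    have h2 := abs_sub_round x
    have h3 : |(round x : ℝ) - n| ≤ |round x - x| + |x - n| := abs_sub_le _ _ _
    rw [abs_sub_comm (round x : ℝ) x] at h3
    linarith

lemma SLat_nonempty (d : ℝ) : (SLat d).Nonempty := ⟨0, 0, by simp⟩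

lemma infDist_SLat_le (d : ℝ) (t : ℝ) (m : ℤ) :
    Metric.infDist t (SLat d) ≤ |t - (m : ℝ) * d| := by
  have hmem : ((m : ℝ) * d) ∈ SLat d := ⟨m, rfl⟩
  have := Metric.infDist_le_dist_of_mem (x := t) hmem
  rwa [Real.dist_eq] at this

lemma infDist_SLat_exists (d : ℝ) (hd : 0 < d) (t : ℝ) :
    ∃ m : ℤ, Metric.infDist t (SLat d) = |t - (m : ℝ) * d| := by
  refine ⟨round (t / d), le_antisymm (infDist_SLat_le d t _) ?_⟩
  by_contra h
  push_neg at h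
  rw [Metric.infDist_lt_iff (SLat_nonempty d)] at h
  obtain ⟨y, ⟨n, rfl⟩, hlt⟩ := h
  rw [Real.dist_eq] at hlt
  have hmin := round_min (t / d) n
  have hfac : ∀ k : ℤ, |t - (k : ℝ) * d| = |t / d - (k : ℝ)| * d := by
    intro k
    have e : t - (k : ℝ) * d = (t / d - (k : ℝ)) * d := by field_simp
    rw [e, abs_mul, abs_of_pos hd]
  rw [hfac, hfac] at hlt
  have := mul_le_mul_of_nonneg_right hmin hd.le
  linarith

lemma cosh_infDist_le (d : ℝ) (t : ℝ) (m : ℤ) :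
    Real.cosh (Metric.infDist t (SLat d)) ≤ Real.cosh (t - (m : ℝ) * d) := by
  rw [← Real.cosh_abs (t - (m : ℝ) * d)]
  apply Real.cosh_le_cosh.2
  rw [abs_of_nonneg Metric.infDist_nonneg, abs_abs]
  exact infDist_SLat_le d t m

lemma cosh_infDist_exists (d : ℝ) (hd : 0 < d) (t : ℝ) :
    ∃ m : ℤ, Real.cosh (Metric.infDist t (SLat d)) = Real.cosh (t - (m : ℝ) * d) := by
  obtain ⟨m, hm⟩ := infDist_SLat_exists d hd t
  exact ⟨m, by rw [hm, Real.cosh_abs]⟩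

lemma mem_Pol_iff {d : ℝ} (hd : 0 < d) {a : ℝ × ℝ} (ha : a ∈ Lcone) :
    a ∈ Pol d ↔ cc d a ≤ 1 := by
  rw [Pol, Set.mem_iUnion]
  constructor
  · rintro ⟨m, hm⟩
    simp only [Set.mem_setOf_eq] at hm
    rw [keyA ha ((m : ℝ) * d)] at hm
    calc cc d a ≤ Real.sqrt (a.2 ^ 2 - a.1 ^ 2) * Real.cosh (tau a - (m : ℝ) * d) := by
          exact mul_le_mul_of_nonneg_left (cosh_infDist_le d (tau a) m) (Real.sqrt_nonneg _)
      _ ≤ 1 := hm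
  · intro h
    obtain ⟨m, hm⟩ := cosh_infDist_exists d hd (tau a)
    refine ⟨m, ?_⟩
    simp only [Set.mem_setOf_eq]
    rw [keyA ha ((m : ℝ) * d), ← hm]
    exact h

lemma tau_continuousOn : ContinuousOn tau Lcone := by
  apply Real.continuous_arsinh.comp_continuousOn
  apply ContinuousOn.div
  · fun_prop
  · apply ContinuousOn.mul
    · exact (continuous_abs.comp continuous_snd).continuousOn
    · exact (Real.continuous_sqrt.comp (by fun_prop)).continuousOn
  · intro a ha
    exact mul_ne_zero (abs_ne_zero.2 (Lcone_a2_ne ha)) (Lcone_r_pos ha).ne'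

lemma cc_continuousOn (d : ℝ) : ContinuousOn (cc d) Lcone := by
  apply ContinuousOn.mul
  · exact (Real.continuous_sqrt.comp (by fun_prop)).continuousOn
  · exact Real.continuous_cosh.comp_continuousOn
      ((Metric.continuous_infDist_pt (SLat d)).comp_continuousOn tau_continuousOn)

lemma smul_fst (s : ℝ) (a : ℝ × ℝ) : (s • a).1 = s * a.1 := rfl
lemma smul_snd (s : ℝ) (a : ℝ × ℝ) : (s • a).2 = s * a.2 := rfl

lemma smul_mem_Lcone {a : ℝ × ℝ} (ha : a ∈ Lcone) {s : ℝ} (hs : s ≠ 0) : s • a ∈ Lcone := by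
  have h : a.1 * a.1 - a.2 * a.2 < 0 := ha
  show (s • a).1 * (s • a).1 - (s • a).2 * (s • a).2 < 0
  rw [smul_fst, smul_snd]
  have hs2 : 0 < s ^ 2 := by positivity
  nlinarith

lemma sqrt_smul (a : ℝ × ℝ) {s : ℝ} (hs : 0 ≤ s) :
    Real.sqrt ((s • a).2 ^ 2 - (s • a).1 ^ 2) = s * Real.sqrt (a.2 ^ 2 - a.1 ^ 2) := by
  rw [smul_fst, smul_snd]
  have h : (s * a.2) ^ 2 - (s * a.1) ^ 2 = s ^ 2 * (a.2 ^ 2 - a.1 ^ 2) := by ring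
  rw [h, Real.sqrt_mul (sq_nonneg s), Real.sqrt_sq hs]

lemma tau_smul {a : ℝ × ℝ} (ha : a ∈ Lcone) {s : ℝ} (hs : 0 < s) : tau (s • a) = tau a := by
  unfold tau
  congr 1
  rw [sqrt_smul a hs.le, smul_fst, smul_snd, abs_mul, abs_of_pos hs]
  have habs2 : |a.2| ≠ 0 := abs_ne_zero.2 (Lcone_a2_ne ha)
  have hr : Real.sqrt (a.2 ^ 2 - a.1 ^ 2) ≠ 0 := (Lcone_r_pos ha).ne'
  field_simp

lemma cc_smul (d : ℝ) {a : ℝ × ℝ} (ha : a ∈ Lcone) {s : ℝ} (hs : 0 < s) :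
    cc d (s • a) = s * cc d a := by
  unfold cc
  rw [tau_smul ha hs, sqrt_smul a hs.le]
  ring

/-- The frontier of `Pol d` inside the cone is the level set `cc = 1`. -/
lemma frontier_inter_eq {d : ℝ} (hd : 0 < d) :
    frontier (Pol d) ∩ Lcone = {a | a ∈ Lcone ∧ cc d a = 1} := by
  ext a
  simp only [Set.mem_inter_iff, Set.mem_setOf_eq]
  rw [frontier]
  constructor
  · rintro ⟨⟨hcl, hni⟩, hL⟩
    refine ⟨hL, le_antisymm ?_ ?_⟩
    · by_contra hlt
      push_neg at hlt
      have hopen : IsOpen (Lcone ∩ cc d ⁻¹' Set.Ioi 1) :=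
        (cc_continuousOn d).isOpen_inter_preimage isOpen_Lcone isOpen_Ioi
      have hdisj : (Lcone ∩ cc d ⁻¹' Set.Ioi 1) ∩ Pol d = ∅ := by
        ext b
        simp only [Set.mem_inter_iff, Set.mem_preimage, Set.mem_Ioi, Set.mem_empty_iff_false,
          iff_false, not_and]
        rintro ⟨hbL, hb1⟩ hbP
        exact absurd ((mem_Pol_iff hd hbL).1 hbP) (by linarith)
      rw [_root_.mem_closure_iff] at hcl
      obtain ⟨y, hy1, hy2⟩ := hcl _ hopen ⟨hL, hlt⟩
      have : y ∈ (Lcone ∩ cc d ⁻¹' Set.Ioi 1) ∩ Pol d := ⟨hy1, hy2⟩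
      rw [hdisj] at this
      exact this
    · by_contra hlt
      push_neg at hlt
      have hopen : IsOpen (Lcone ∩ cc d ⁻¹' Set.Iio 1) :=
        (cc_continuousOn d).isOpen_inter_preimage isOpen_Lcone isOpen_Iio
      have hsub : Lcone ∩ cc d ⁻¹' Set.Iio 1 ⊆ Pol d := by
        rintro b ⟨hbL, hb1⟩
        exact (mem_Pol_iff hd hbL).2 (le_of_lt hb1)
      exact hni (Set.mem_of_subset_of_mem (interior_maximal hsub hopen)
        (⟨hL, hlt⟩ : a ∈ Lcone ∩ cc d ⁻¹' Set.Iio 1))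
  · rintro ⟨hL, h1⟩
    refine ⟨⟨subset_closure ((mem_Pol_iff hd hL).2 h1.le), ?_⟩, hL⟩
    intro hint
    have hc : Continuous (fun s : ℝ => s • a) := by fun_prop
    have hnb : (fun s : ℝ => s • a) ⁻¹' interior (Pol d) ∈ nhds (1 : ℝ) := by
      apply hc.continuousAt.preimage_mem_nhds
      exact isOpen_interior.mem_nhds (by simpa using hint)
    obtain ⟨ε, hε, hball⟩ := Metric.mem_nhds_iff.1 hnb
    have hmem : (1 + ε / 2) • a ∈ interior (Pol d) := by
      apply hball
      simp only [Metric.mem_ball, Real.dist_eq]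
      rw [show (1 : ℝ) + ε / 2 - 1 = ε / 2 by ring, abs_of_pos (by linarith)]
      linarith
    have hsL : (1 + ε / 2) • a ∈ Lcone := smul_mem_Lcone hL (by positivity)
    have hccs : cc d ((1 + ε / 2) • a) ≤ 1 := (mem_Pol_iff hd hsL).1 (interior_subset hmem)
    rw [cc_smul d hL (by positivity), h1, mul_one] at hccs
    linarith

lemma Ghyp_subset_Lcone : Ghyp ⊆ Lcone := fun a ha => by
  have : a.1 * a.1 - a.2 * a.2 = -1 := ha
  show a.1 * a.1 - a.2 * a.2 < 0
  rw [this]; norm_num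

lemma Ghyp_sq {a : ℝ × ℝ} (ha : a ∈ Ghyp) : a.2 ^ 2 - a.1 ^ 2 = 1 := by
  have : a.1 * a.1 - a.2 * a.2 = -1 := ha
  linear_combination -this

lemma contr_eq (a : ℝ × ℝ) :
    contr a = (Real.sqrt (a.2 ^ 2 - a.1 ^ 2))⁻¹ • a := by
  unfold contr
  have : -(a.1 * a.1 - a.2 * a.2) = a.2 ^ 2 - a.1 ^ 2 := by ring
  rw [this]

lemma contr_mem_Ghyp {a : ℝ × ℝ} (ha : a ∈ Lcone) : contr a ∈ Ghyp := by
  rw [contr_eq]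
  have hr2 := Lcone_r_sq ha
  have hrpos := Lcone_r_pos ha
  set r := Real.sqrt (a.2 ^ 2 - a.1 ^ 2)
  show (r⁻¹ • a).1 * (r⁻¹ • a).1 - (r⁻¹ • a).2 * (r⁻¹ • a).2 = -1
  rw [smul_fst, smul_snd]
  field_simp
  linear_combination hr2

lemma one_le_cosh' (x : ℝ) : 1 ≤ Real.cosh x := by
  nlinarith [Real.cosh_sq_sub_sinh_sq x, Real.cosh_pos x, sq_nonneg (Real.sinh x)]

/-- The inverse map `G → ∂P ∩ L`. -/
noncomputable def invmap (d : ℝ) (a : ℝ × ℝ) : ℝ × ℝ :=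
  (Real.cosh (Metric.infDist (tau a) (SLat d)))⁻¹ • a

lemma invmap_mem {d : ℝ} (hd : 0 < d) {a : ℝ × ℝ} (ha : a ∈ Ghyp) :
    invmap d a ∈ frontier (Pol d) ∩ Lcone := by
  have haL := Ghyp_subset_Lcone ha
  set k := Real.cosh (Metric.infDist (tau a) (SLat d)) with hk
  have hkpos : 0 < k := lt_of_lt_of_le one_pos (one_le_cosh' _)
  rw [frontier_inter_eq hd]
  refine ⟨smul_mem_Lcone haL (by positivity), ?_⟩
  rw [invmap, ← hk, cc_smul d haL (by positivity)]
  have hcca : cc d a = k := by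
    rw [cc, Ghyp_sq ha, Real.sqrt_one, one_mul]
  rw [hcca, inv_mul_cancel₀ hkpos.ne']

lemma contr_invmap {d : ℝ} (hd : 0 < d) {a : ℝ × ℝ} (ha : a ∈ Ghyp) :
    contr (invmap d a) = a := by
  set k := Real.cosh (Metric.infDist (tau a) (SLat d)) with hk
  have hkpos : 0 < k := lt_of_lt_of_le one_pos (one_le_cosh' _)
  rw [invmap, ← hk, contr_eq]
  have h : (k⁻¹ • a).2 ^ 2 - (k⁻¹ • a).1 ^ 2 = (k⁻¹) ^ 2 := by
    rw [smul_fst, smul_snd]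
    have h1 := Ghyp_sq ha
    linear_combination (k⁻¹) ^ 2 * h1
  rw [h, Real.sqrt_sq (by positivity), inv_inv, smul_smul, mul_inv_cancel₀ hkpos.ne', one_smul]

lemma invmap_contr {d : ℝ} (hd : 0 < d) {a : ℝ × ℝ}
    (ha : a ∈ frontier (Pol d) ∩ Lcone) : invmap d (contr a) = a := by
  rw [frontier_inter_eq hd] at ha
  obtain ⟨haL, hcc⟩ := ha
  have hrpos := Lcone_r_pos haL
  set r := Real.sqrt (a.2 ^ 2 - a.1 ^ 2) with hr
  rw [contr_eq, invmap, tau_smul haL (by positivity)]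
  have hk : Real.cosh (Metric.infDist (tau a) (SLat d)) = r⁻¹ := by
    have : r * Real.cosh (Metric.infDist (tau a) (SLat d)) = 1 := hcc
    field_simp
    linarith [this]
  rw [hk, inv_inv, smul_smul, mul_inv_cancel₀ hrpos.ne', one_smul]

lemma contr_continuousOn : ContinuousOn contr Lcone := by
  have : ContinuousOn (fun a : ℝ × ℝ => (Real.sqrt (a.2 ^ 2 - a.1 ^ 2))⁻¹) Lcone := by
    apply ContinuousOn.inv₀
    · exact (Real.continuous_sqrt.comp (by fun_prop)).continuousOn
    · intro a ha; exact (Lcone_r_pos ha).ne'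
  have h2 : ContinuousOn (fun a : ℝ × ℝ => (Real.sqrt (a.2 ^ 2 - a.1 ^ 2))⁻¹ • a) Lcone :=
    this.smul continuousOn_id
  intro a ha
  have := h2 a ha
  apply ContinuousWithinAt.congr this
  · intro b _; rw [contr_eq]
  · rw [contr_eq]

lemma invmap_continuousOn (d : ℝ) : ContinuousOn (invmap d) Lcone := by
  refine ContinuousOn.smul (f := fun a => (Real.cosh (Metric.infDist (tau a) (SLat d)))⁻¹) (g := id) ?_ ?_
  · apply ContinuousOn.inv₀
    · exact Real.continuous_cosh.comp_continuousOn
        ((Metric.continuous_infDist_pt (SLat d)).comp_continuousOn tau_continuousOn)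
    · intro a _
      exact (lt_of_lt_of_le one_pos (one_le_cosh' _)).ne'
  · exact continuousOn_id

/-- The homeomorphism `∂P ∩ L ≃ₜ G`. -/
noncomputable def theHomeo (d : ℝ) (hd : 0 < d) :
    ↥(frontier (Pol d) ∩ Lcone) ≃ₜ ↥Ghyp where
  toFun x := ⟨contr x.1, contr_mem_Ghyp x.2.2⟩
  invFun y := ⟨invmap d y.1, invmap_mem hd y.2⟩
  left_inv x := Subtype.ext (invmap_contr hd x.2)
  right_inv y := Subtype.ext (contr_invmap hd y.2)
  continuous_toFun := by
    apply Continuous.subtype_mk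
    exact contr_continuousOn.comp_continuous continuous_subtype_val (fun x => x.2.2)
  continuous_invFun := by
    apply Continuous.subtype_mk
    exact (invmap_continuousOn d).comp_continuous continuous_subtype_val
      (fun y => Ghyp_subset_Lcone y.2)

lemma boost_q (d : ℝ) (m : ℤ) {ε : ℝ} (hε : ε = 1 ∨ ε = -1) (a : ℝ × ℝ) :
    (boost d m ε a).1 * (boost d m ε a).1 - (boost d m ε a).2 * (boost d m ε a).2
      = a.1 * a.1 - a.2 * a.2 := by
  have h := Real.cosh_sq_sub_sinh_sq ((m : ℝ) * d)
  rcases hε with rfl | rfl <;>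
    simp only [boost, one_smul, neg_smul, Prod.fst_neg, Prod.snd_neg, Prod.mk.injEq] <;>
    nlinarith [h]

lemma boost_smul (d : ℝ) (m : ℤ) (ε : ℝ) (c : ℝ) (a : ℝ × ℝ) :
    boost d m ε (c • a) = c • boost d m ε a := by
  unfold boost
  rw [smul_comm]
  congr 1
  rw [smul_fst, smul_snd]
  show ((c • a).1 * _ + (c • a).2 * _, (c • a).1 * _ + (c • a).2 * _)
      = (c * _, c * _)
  rw [smul_fst, smul_snd]
  exact Prod.ext (by ring) (by ring)

theorem stmt5 (d : ℝ) (hd : 0 < d) :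
    (∃ h : ↥(frontier (Pol d) ∩ Lcone) ≃ₜ ↥Ghyp,
      ∀ x : ↥(frontier (Pol d) ∩ Lcone), (h x : ℝ × ℝ) = contr (x : ℝ × ℝ)) ∧
    (∀ m : ℤ, ∀ ε : ℝ, (ε = 1 ∨ ε = -1) → ∀ a ∈ frontier (Pol d) ∩ Lcone,
      contr (boost d m ε a) = boost d m ε (contr a)) := by
  constructor
  · exact ⟨theHomeo d hd, fun x => rfl⟩
  · intro m ε hε a _
    calc contr (boost d m ε a)
        = (Real.sqrt (-(a.1 * a.1 - a.2 * a.2)))⁻¹ • boost d m ε a := by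
          rw [contr, boost_q d m hε a]
      _ = boost d m ε ((Real.sqrt (-(a.1 * a.1 - a.2 * a.2)))⁻¹ • a) :=
          (boost_smul d m ε _ a).symm
      _ = boost d m ε (contr a) := by rw [contr]
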